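/- The unit sphere ∂D is comeager in the closed unit ball D̄ of an infinite-dimensional separable Hilbert space endowed with the weak topology; equivalently, the open unit ball is meager in (D̄, weak topology). -/

import Mathlib

open Filter Set RealInnerProductSpace

/-- The unit sphere is comeager in the closed unit ball of an infinite-dimensional
separable real Hilbert space endowed with the weak topology (equivalently, the open
ball is meager). -/
theorem sphere_comeager_in_weak_ball
    {E : Type*} [NormedAddCommGroup E] [InnerProductSpace ℝ E] [CompleteSpace E]
    [TopologicalSpace.SeparableSpace E] (hinf : ¬ FiniteDimensional ℝ E) :
    letI : TopologicalSpace {x : E // ‖x‖ ≤ 1} :=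
      TopologicalSpace.induced
        (fun x : {x : E // ‖x‖ ≤ 1} => fun ℓ : E →L[ℝ] ℝ => ℓ x.1) Pi.topologicalSpace
    {x : {x : E // ‖x‖ ≤ 1} | ‖x.1‖ = 1} ∈ residual {x : E // ‖x‖ ≤ 1} := by
  letI inst : TopologicalSpace {x : E // ‖x‖ ≤ 1} :=
      TopologicalSpace.induced
        (fun x : {x : E // ‖x‖ ≤ 1} => fun ℓ : E →L[ℝ] ℝ => ℓ x.1) Pi.topologicalSpace
  -- evaluation maps are continuous for the weak topology
  have hcont : ∀ ℓ : E →L[ℝ] ℝ, Continuous (fun x : {x : E // ‖x‖ ≤ 1} => ℓ x.1) := by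
    intro ℓ
    have h1 : Continuous
        (fun x : {x : E // ‖x‖ ≤ 1} => fun ℓ' : E →L[ℝ] ℝ => ℓ' x.1) :=
      continuous_induced_dom
    exact (continuous_apply ℓ).comp h1
  -- norm sublevel sets are weakly closed
  have hclosed : ∀ c : ℝ, 0 ≤ c → IsClosed {x : {x : E // ‖x‖ ≤ 1} | ‖x.1‖ ≤ c} := by
    intro c hc
    have hset : {x : {x : E // ‖x‖ ≤ 1} | ‖x.1‖ ≤ c}
        = ⋂ ℓ : E →L[ℝ] ℝ, {x | ℓ x.1 ≤ c * ‖ℓ‖} := by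
      ext x
      simp only [mem_setOf_eq, mem_iInter]
      constructor
      · intro h ℓ
        calc ℓ x.1 ≤ ‖ℓ x.1‖ := le_abs_self _
          _ ≤ ‖ℓ‖ * ‖x.1‖ := ℓ.le_opNorm _
          _ ≤ ‖ℓ‖ * c := by gcongr
          _ = c * ‖ℓ‖ := mul_comm _ _
      · intro h
        have h1 := h (innerSL ℝ x.1)
        rw [innerSL_apply_norm] at h1
        have h2 : (innerSL ℝ x.1) x.1 = ‖x.1‖ ^ 2 := real_inner_self_eq_norm_sq x.1
        rw [h2] at h1
        rcases eq_or_lt_of_le (norm_nonneg x.1) with h0 | h0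
        · rw [← h0]; exact hc
        · nlinarith
    rw [hset]
    exact isClosed_iInter fun ℓ => isClosed_le (hcont ℓ) continuous_const
  -- the unit sphere is weakly dense in the ball
  have hdense : Dense {x : {x : E // ‖x‖ ≤ 1} | ‖x.1‖ = 1} := by
    intro x
    rw [mem_closure_iff_nhds, nhds_induced]
    rintro s hs
    rw [Filter.mem_comap] at hs
    obtain ⟨t, ht, hts⟩ := hs
    rw [nhds_pi, Filter.mem_pi'] at ht
    obtain ⟨I, V, hV, hVt⟩ := ht
    classical
    set J : Finset (E →L[ℝ] ℝ) := insert (innerSL ℝ x.1) I with hJ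
    -- find a nonzero common zero of the functionals in J
    obtain ⟨z, hz0, hz⟩ : ∃ z : E, z ≠ 0 ∧ ∀ ℓ ∈ J, ℓ z = 0 := by
      by_contra hcon
      push_neg at hcon
      set L : E →ₗ[ℝ] (J → ℝ) :=
        LinearMap.pi (fun ℓ : J => (ℓ.1 : E →L[ℝ] ℝ).toLinearMap) with hL
      have hinj : Function.Injective L := by
        rw [← LinearMap.ker_eq_bot, Submodule.eq_bot_iff]
        intro z hzL
        by_contra hzne
        obtain ⟨ℓ, hℓJ, hℓz⟩ := hcon z hzne
        have : L z ⟨ℓ, hℓJ⟩ = 0 := by rw [hzL]; rfl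
        exact hℓz this
      exact hinf (FiniteDimensional.of_injective L hinj)
    have hxz : (inner ℝ x.1 z : ℝ) = 0 := by simpa using hz _ (Finset.mem_insert_self _ _)
    have hIz : ∀ ℓ ∈ I, ℓ z = 0 := fun ℓ hℓ => hz ℓ (Finset.mem_insert_of_mem hℓ)
    set a : ℝ := Real.sqrt (1 - ‖x.1‖ ^ 2) with ha
    have hx1 : ‖x.1‖ ≤ 1 := x.2
    have hnn : (0:ℝ) ≤ 1 - ‖x.1‖ ^ 2 := by nlinarith [norm_nonneg x.1]
    have hzn : ‖z‖ ≠ 0 := norm_ne_zero_iff.mpr hz0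
    set y : E := x.1 + (a / ‖z‖) • z with hy
    have hy2 : ‖y‖ ^ 2 = 1 := by
      rw [hy, norm_add_sq_real, real_inner_smul_right, hxz, norm_smul, mul_pow]
      have hq : (‖(a / ‖z‖ : ℝ)‖) ^ 2 * ‖z‖ ^ 2 = a ^ 2 := by
        rw [Real.norm_eq_abs, sq_abs, div_pow]
        field_simp
      rw [hq, ha, Real.sq_sqrt hnn]
      ring
    have hy1 : ‖y‖ = 1 := by
      have := Real.sqrt_sq (norm_nonneg y)
      rw [hy2, Real.sqrt_one] at this
      exact this.symm
    refine ⟨⟨y, hy1.le⟩, hts ?_, hy1⟩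
    apply hVt
    intro ℓ hℓ
    have : ℓ y = ℓ x.1 := by
      rw [hy, map_add, map_smul, hIz ℓ hℓ, smul_zero, add_zero]
    simpa [this] using mem_of_mem_nhds (hV ℓ)
  -- the sphere is a countable intersection of weakly open sets
  have hGδ : IsGδ {x : {x : E // ‖x‖ ≤ 1} | ‖x.1‖ = 1} := by
    have hset : {x : {x : E // ‖x‖ ≤ 1} | ‖x.1‖ = 1}
        = ⋂ n : ℕ, {x : {x : E // ‖x‖ ≤ 1} | ‖x.1‖ ≤ 1 - 1 / (n + 1)}ᶜ := by
      ext x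
      simp only [mem_setOf_eq, mem_iInter, mem_compl_iff, not_le]
      constructor
      · intro h n
        rw [h]
        have : (0:ℝ) < 1 / (n + 1) := by positivity
        linarith
      · intro h
        refine le_antisymm x.2 ?_
        by_contra hlt
        push_neg at hlt
        obtain ⟨n, hn⟩ := exists_nat_one_div_lt (by linarith : (0:ℝ) < 1 - ‖x.1‖)
        have := h n
        linarith
    rw [hset]
    refine IsGδ.iInter_of_isOpen fun n => ?_
    refine (hclosed (1 - 1 / (n + 1)) ?_).isOpen_compl
    have h1 : (1:ℝ) / (n + 1) ≤ 1 := by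
      rw [div_le_one (by positivity)]
      linarith [Nat.cast_nonneg (α := ℝ) n]
    linarith
  exact residual_of_dense_Gδ hGδ hdense
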